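/- Let G = (V,E) be a finite connected simple graph with maximum degree at most d and tree-length at most t, and let s ∈ V. Then every layering class of G with respect to s contains at most Σ_{m=0}^{3t+1} d^m vertices. -/

import Mathlib

open SimpleGraph

/-- A tree decomposition of a graph `G`, with decomposition tree indexed by `ι`. -/
structure TreeDecomp {V : Type} (G : SimpleGraph V) (ι : Type) : Type where
  /-- the decomposition tree -/
  tree : SimpleGraph ι
  /-- the decomposition tree is a tree -/
  isTree : tree.IsTree
  /-- the bags -/
  bag : ι → Set V
  /-- every vertex of `G` belongs to some bag -/
  bag_cover : ∀ v : V, ∃ t, v ∈ bag t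
  /-- both endpoints of every edge of `G` lie in a common bag -/
  bag_edge : ∀ ⦃u v : V⦄, G.Adj u v → ∃ t, u ∈ bag t ∧ v ∈ bag t
  /-- the nodes whose bag contains a given vertex induce a connected subtree -/
  bag_conn : ∀ v : V, (tree.induce {t | v ∈ bag t}).Connected

/-- `G` has a tree decomposition all of whose bags have diameter at most `ℓ` in `G`. -/
def HasTDLength {V : Type} (G : SimpleGraph V) (ℓ : ℕ) : Prop :=
  ∃ (ι : Type) (td : TreeDecomp G ι), ∀ t, ∀ u ∈ td.bag t, ∀ v ∈ td.bag t, G.dist u v ≤ ℓ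

/-- The tree-length of `G`: the minimum length over all tree decompositions of `G`. -/
noncomputable def treeLength {V : Type} (G : SimpleGraph V) : ℕ :=
  sInf {ℓ | HasTDLength G ℓ}

/-- `u` and `v` are layering-equivalent w.r.t. source `s`: they lie at the same
distance `i` from `s` and are joined by a path all of whose (intermediate)
vertices are at distance at least `i` from `s`. -/
def LayerEquiv {V : Type} (G : SimpleGraph V) (s u v : V) : Prop :=
  G.dist s u = G.dist s v ∧
    ∃ p : G.Walk u v, p.IsPath ∧ ∀ w ∈ p.support, G.dist s u ≤ G.dist s w

/-- The layering class of the vertex `v` w.r.t. source `s`. -/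
def layeringClassOf {V : Type} (G : SimpleGraph V) (s v : V) : Set V :=
  {u | LayerEquiv G s v u}

/-- `C` is a layering class of `G` w.r.t. source `s`. -/
def IsLayeringClass {V : Type} (G : SimpleGraph V) (s : V) (C : Set V) : Prop :=
  ∃ v, C = layeringClassOf G s v

/-! ### Auxiliary lemmas -/

section Aux

/-- Extract, from connectivity of an induced subgraph, walks in the ambient graph
whose support stays in the inducing set. -/
lemma aux_preconn {ι : Type} (T : SimpleGraph ι) (S : Set ι) (h : (T.induce S).Connected)
    {x y : ι} (hx : x ∈ S) (hy : y ∈ S) :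
    ∃ q : T.Walk x y, ∀ n ∈ q.support, n ∈ S := by
  obtain ⟨w⟩ := h ⟨x, hx⟩ ⟨y, hy⟩
  refine ⟨w.map ⟨Subtype.val, fun h => h⟩, ?_⟩
  intro n hn
  rw [SimpleGraph.Walk.support_map, List.mem_map] at hn
  obtain ⟨⟨n', hn'⟩, _, rfl⟩ := hn
  exact hn'

/-- Ball (sphere) cardinality bound. -/
lemma aux_sphere_card {V : Type} [Fintype V] [DecidableEq V]
    (G : SimpleGraph V) [DecidableRel G.Adj] (hG : G.Connected) (d : ℕ)
    (hdeg : ∀ v : V, (G.neighborSet v).ncard ≤ d) (s : V) (m : ℕ) :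
    (Finset.univ.filter (fun u => G.dist s u = m)).card ≤ d ^ m := by
  induction m with
  | zero =>
    have h1 : (Finset.univ.filter (fun u => G.dist s u = 0)).card ≤ 1 := by
      refine Finset.card_le_one.mpr ?_
      intro a ha b hb
      simp only [Finset.mem_filter, Finset.mem_univ, true_and] at ha hb
      have ha' := ((hG a s).dist_eq_zero_iff).mp (by rwa [dist_comm] at ha)
      have hb' := ((hG b s).dist_eq_zero_iff).mp (by rwa [dist_comm] at hb)
      rw [ha', hb']
    simpa using h1
  | succ m ih =>
    have hsub : (Finset.univ.filter (fun u => G.dist s u = m + 1)) ⊆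
        (Finset.univ.filter (fun u => G.dist s u = m)).biUnion (fun c => G.neighborFinset c) := by
      intro u hu
      simp only [Finset.mem_filter, Finset.mem_univ, true_and] at hu
      obtain ⟨p, hp⟩ := hG.exists_walk_length_eq_dist s u
      rw [hu] at hp
      obtain ⟨c, h, rest, hq⟩ : ∃ (c : V) (h : G.Adj u c) (rest : G.Walk c s),
          p.reverse = SimpleGraph.Walk.cons h rest := by
        cases hqq : p.reverse with
        | nil =>
          exfalso
          have := congrArg SimpleGraph.Walk.length hqq
          simp [hp] at this
        | cons h rest => exact ⟨_, h, rest, rfl⟩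
      have hlen : rest.length = m := by
        have := congrArg SimpleGraph.Walk.length hq
        simp [hp] at this
        omega
      have h1 : G.dist s c ≤ m := by
        calc G.dist s c ≤ rest.reverse.length := dist_le _
          _ = m := by simp [hlen]
      have h2 : G.dist s u ≤ G.dist s c + 1 := by
        have := hG.dist_triangle (u := s) (v := c) (w := u)
        have hd : G.dist c u ≤ 1 := by
          have : G.dist c u ≤ (SimpleGraph.Walk.cons h.symm SimpleGraph.Walk.nil :
              G.Walk c u).length := dist_le _
          simpa using this
        omega
      have hc : G.dist s c = m := by omega
      simp only [Finset.mem_biUnion, Finset.mem_filter, Finset.mem_univ, true_and]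
      exact ⟨c, hc, by simp [mem_neighborFinset]; exact h.symm⟩
    calc (Finset.univ.filter (fun u => G.dist s u = m + 1)).card
        ≤ _ := Finset.card_le_card hsub
      _ ≤ ∑ c ∈ (Finset.univ.filter (fun u => G.dist s u = m)), (G.neighborFinset c).card :=
          Finset.card_biUnion_le
      _ ≤ ∑ c ∈ (Finset.univ.filter (fun u => G.dist s u = m)), d := by
          refine Finset.sum_le_sum fun c _ => ?_
          have := hdeg c
          rwa [Set.ncard_eq_toFinset_card'] at this
      _ = (Finset.univ.filter (fun u => G.dist s u = m)).card * d := by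
          simp [Finset.sum_const, mul_comm]
      _ ≤ d ^ m * d := Nat.mul_le_mul_right d ih
      _ = d ^ (m + 1) := by ring

lemma aux_ball_card {V : Type} [Fintype V] [DecidableEq V]
    (G : SimpleGraph V) [DecidableRel G.Adj] (hG : G.Connected) (d : ℕ)
    (hdeg : ∀ v : V, (G.neighborSet v).ncard ≤ d) (s : V) (r : ℕ) :
    (Finset.univ.filter (fun u => G.dist s u ≤ r)).card ≤ ∑ m ∈ Finset.range (r + 1), d ^ m := by
  have : (Finset.univ.filter (fun u => G.dist s u ≤ r)) =
      (Finset.range (r + 1)).biUnion (fun m => Finset.univ.filter (fun u => G.dist s u = m)) := by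
    ext u
    simp [Nat.lt_succ_iff]
  rw [this]
  exact le_trans Finset.card_biUnion_le
    (Finset.sum_le_sum fun m _ => aux_sphere_card G hG d hdeg s m)

/-- If a walk avoids an edge, its endpoints are reachable in the graph minus that edge. -/
lemma aux_walk_avoid {ι : Type} {T : SimpleGraph ι} {a b : ι} {x y : ι}
    (q : T.Walk x y) (h : s(a, b) ∉ q.edges) :
    (T \ fromEdgeSet {s(a, b)}).Reachable x y := by
  refine ⟨q.transfer _ fun e he => ?_⟩
  have he' : e ∈ T.edgeSet := q.edges_subset_edgeSet he
  have hne : e ≠ s(a, b) := fun hc => h (hc ▸ he)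
  simp only [edgeSet_sdiff, Set.mem_diff, edgeSet_fromEdgeSet]
  refine ⟨he', ?_⟩
  simp only [Set.mem_diff, Set.mem_singleton_iff]
  exact fun hc => hne hc.1

/-- If the endpoints are not reachable avoiding an edge, the walk uses the edge. -/
lemma aux_walk_cross {ι : Type} {T : SimpleGraph ι} {a b : ι} {x y : ι}
    (q : T.Walk x y) (h : ¬ (T \ fromEdgeSet {s(a, b)}).Reachable x y) :
    s(a, b) ∈ q.edges := by
  by_contra hc
  exact h (aux_walk_avoid q hc)

/-- Find either the start in `N`, or a tree edge entering `N`. -/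
lemma aux_find {ι : Type} {T : SimpleGraph ι} (N : Set ι) :
    ∀ {x y : ι} (_ : T.Walk x y), y ∈ N →
      x ∈ N ∨ ∃ a b : ι, T.Adj a b ∧ a ∉ N ∧ b ∈ N ∧
        (T \ fromEdgeSet {s(a, b)}).Reachable x a := by
  intro x y q
  induction q with
  | nil => exact fun h => Or.inl h
  | @cons x v y h q' ih =>
    intro hy
    by_cases hx : x ∈ N
    · exact Or.inl hx
    right
    by_cases hv : v ∈ N
    · exact ⟨x, v, h, hx, hv, Reachable.refl _⟩
    rcases ih hy with hv' | ⟨a, b, hab, haN, hbN, hr⟩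
    · exact absurd hv' hv
    refine ⟨a, b, hab, haN, hbN, Reachable.trans ⟨SimpleGraph.Walk.cons ?_ SimpleGraph.Walk.nil⟩ hr⟩
    have hne : s(x, v) ≠ s(a, b) := by
      intro hc
      rw [Sym2.eq_iff] at hc
      rcases hc with ⟨rfl, rfl⟩ | ⟨rfl, rfl⟩
      · exact hv hbN
      · exact hx hbN
    constructor
    · exact h
    · simp only [fromEdgeSet_adj, Set.mem_singleton_iff]
      exact fun hc => hne hc.1

end Aux

section TD

variable {V : Type} {G : SimpleGraph V} {ι : Type} (td : TreeDecomp G ι)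

/-- The set of tree nodes whose bag meets the support of a walk `p`. -/
def nodesOf {u v : V} (p : G.Walk u v) : Set ι :=
  {n | ∃ w ∈ p.support, w ∈ td.bag n}

/-- Every node of `nodesOf p` is connected within `nodesOf p` to any bag-node of
the first vertex of `p`. -/
lemma nodesOf_hub : ∀ {u v : V} (p : G.Walk u v) (tu : ι), u ∈ td.bag tu →
    ∀ n ∈ nodesOf td p, ∃ q : td.tree.Walk n tu, ∀ m ∈ q.support, m ∈ nodesOf td p := by
  intro u v p
  induction p with
  | nil =>
    intro tu htu n hn
    obtain ⟨w, hw, hwn⟩ := hn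
    simp only [SimpleGraph.Walk.support_nil, List.mem_singleton] at hw
    rw [hw] at hwn
    obtain ⟨q, hq⟩ := aux_preconn td.tree {t | _ ∈ td.bag t} (td.bag_conn _) hwn htu
    exact ⟨q, fun m hm => ⟨_, by simp, hq m hm⟩⟩
  | @cons u u' v h p' ih =>
    intro tu htu n hn
    have hsub : nodesOf td p' ⊆ nodesOf td (SimpleGraph.Walk.cons h p') := by
      rintro m ⟨w, hw, hwm⟩
      exact ⟨w, by simp [hw], hwm⟩
    obtain ⟨w, hw, hwn⟩ := hn
    simp only [SimpleGraph.Walk.support_cons, List.mem_cons] at hw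
    rcases hw with hw | hw
    · -- n is a bag-node of u
      rw [hw] at hwn
      obtain ⟨q, hq⟩ := aux_preconn td.tree {t | u ∈ td.bag t} (td.bag_conn u) hwn htu
      exact ⟨q, fun m hm => ⟨u, by simp, hq m hm⟩⟩
    · -- n is a node of nodesOf p'
      obtain ⟨n0, hn0u, hn0u'⟩ := td.bag_edge h
      obtain ⟨q1, hq1⟩ := ih n0 hn0u' n ⟨w, hw, hwn⟩
      obtain ⟨q2, hq2⟩ := aux_preconn td.tree {t | u ∈ td.bag t} (td.bag_conn u) hn0u htu
      refine ⟨q1.append q2, fun m hm => ?_⟩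
      rw [SimpleGraph.Walk.mem_support_append_iff] at hm
      rcases hm with hm | hm
      · exact hsub (hq1 m hm)
      · exact ⟨u, by simp, hq2 m hm⟩

/-- Bag-hitting lemma: walking from a vertex in an `¬R`-bag to a vertex in an
`R`-bag, one must pass through the bag of `b`. -/
lemma aux_hit {W0 : Type} {G0 : SimpleGraph W0} (bag : ι → Set W0) (R : ι → Prop) (b : ι)
    (hkey : ∀ (y : W0) (n1 n2 : ι), y ∈ bag n1 → y ∈ bag n2 → ¬ R n1 → R n2 → y ∈ bag b)
    (hedge : ∀ ⦃x y : W0⦄, G0.Adj x y → ∃ n, x ∈ bag n ∧ y ∈ bag n) :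
    ∀ {x w : W0} (W : G0.Walk x w), (∃ n, ¬ R n ∧ x ∈ bag n) → (∃ n, R n ∧ w ∈ bag n) →
      ∃ z ∈ W.support, z ∈ bag b := by
  intro x w W
  induction W with
  | nil =>
    rintro ⟨n1, hn1r, hn1⟩ ⟨n2, hn2r, hn2⟩
    exact ⟨_, by simp, hkey _ n1 n2 hn1 hn2 hn1r hn2r⟩
  | @cons x x' w' hadj W' ih =>
    rintro ⟨n1, hn1r, hn1⟩ hw
    by_cases hxb : ∃ n, R n ∧ x ∈ bag n
    · obtain ⟨n2, hn2r, hn2⟩ := hxb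
      exact ⟨x, by simp, hkey x n1 n2 hn1 hn2 hn1r hn2r⟩
    · obtain ⟨t0, ht0x, ht0x'⟩ := hedge hadj
      have ht0 : ¬ R t0 := fun hc => hxb ⟨t0, hc, ht0x⟩
      obtain ⟨z, hz, hzb⟩ := ih ⟨t0, ht0, ht0x'⟩ hw
      exact ⟨z, by simp [hz], hzb⟩

/-- Key separator lemma: there is a bag meeting the walk `p` such that every walk
from `s` to a vertex of `p` meets that bag. -/
lemma aux_sep {u v : V} (p : G.Walk u v) (s : V) :
    ∃ bnode : ι, (∃ z ∈ p.support, z ∈ td.bag bnode) ∧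
      ∀ (w : V), w ∈ p.support → ∀ (W : G.Walk s w), ∃ x ∈ W.support, x ∈ td.bag bnode := by
  classical
  obtain ⟨ts, hts⟩ := td.bag_cover s
  obtain ⟨tu, htu⟩ := td.bag_cover u
  set N : Set ι := nodesOf td p with hN
  have htuN : tu ∈ N := ⟨u, SimpleGraph.Walk.start_mem_support p, htu⟩
  obtain ⟨q⟩ := td.isTree.isConnected ts tu
  rcases aux_find N q htuN with htsN | ⟨a, b, hab, haN, hbN, hreach⟩
  · -- the bag of ts works: s itself is in it
    refine ⟨ts, htsN, fun w _ W => ⟨s, W.start_mem_support, hts⟩⟩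
  · -- the bag of b works
    set T' := td.tree \ fromEdgeSet {s(a, b)} with hT'
    -- every node of N is reachable from b in T'
    have hNside : ∀ n ∈ N, T'.Reachable b n := by
      intro n hn
      obtain ⟨q1, hq1⟩ := nodesOf_hub td p tu htu n hn
      obtain ⟨q2, hq2⟩ := nodesOf_hub td p tu htu b hbN
      have hsup : ∀ m ∈ (q1.append q2.reverse).support, m ∈ N := by
        intro m hm
        rw [SimpleGraph.Walk.mem_support_append_iff] at hm
        rcases hm with hm | hm
        · exact hq1 m hm
        · exact hq2 m (by rwa [SimpleGraph.Walk.support_reverse, List.mem_reverse] at hm)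
      have hnoedge : s(a, b) ∉ (q1.append q2.reverse).edges := by
        intro hc
        exact haN (hsup a (SimpleGraph.Walk.fst_mem_support_of_mem_edges _ hc))
      exact (aux_walk_avoid _ hnoedge).symm
    -- ts is not reachable from b in T'
    have htsSide : ¬ T'.Reachable b ts := by
      intro hc
      have : T'.Reachable b a := hc.trans hreach
      have hbridge : td.tree.IsBridge s(a, b) :=
        (isAcyclic_iff_forall_edge_isBridge.mp td.isTree.IsAcyclic) (by
          rwa [mem_edgeSet])
      exact (isBridge_iff.mp hbridge) (this.symm)
    -- key fact: a vertex lying both in a bag not-reachable-from-b and in a bag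
    -- reachable-from-b lies in the bag of b
    have hkey : ∀ (w : V) (t1 t2 : ι), w ∈ td.bag t1 → w ∈ td.bag t2 →
        ¬ T'.Reachable b t1 → T'.Reachable b t2 → w ∈ td.bag b := by
      intro w t1 t2 h1 h2 hr1 hr2
      obtain ⟨q', hq'⟩ := aux_preconn td.tree {t | w ∈ td.bag t} (td.bag_conn w) h1 h2
      have : ¬ (T'.Reachable t1 t2) := fun hc => hr1 (hr2.trans hc.symm)
      have hcross := aux_walk_cross q' this
      exact hq' b (SimpleGraph.Walk.snd_mem_support_of_mem_edges q' hcross)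
    refine ⟨b, ?_, ?_⟩
    · obtain ⟨z, hz, hzb⟩ := hbN
      exact ⟨z, hz, hzb⟩
    · intro w hw W
      obtain ⟨tw, htw⟩ := td.bag_cover w
      have hwN : tw ∈ N := ⟨w, hw, htw⟩
      exact aux_hit td.bag (fun n => T'.Reachable b n) b hkey td.bag_edge W
        ⟨ts, htsSide, hts⟩ ⟨tw, hNside tw hwN, htw⟩

end TD

/-- Any two layering-equivalent vertices are at distance at most `3t+1` when `G`
has a tree decomposition of length at most `t`. -/
lemma aux_dist_le {V : Type} (G : SimpleGraph V) (hG : G.Connected) (t : ℕ)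
    (h : HasTDLength G t) (s u v : V) (huv : LayerEquiv G s u v) :
    G.dist u v ≤ 3 * t + 1 := by
  classical
  obtain ⟨ι, td, hlen⟩ := h
  obtain ⟨hdist, p, hp, hsupp⟩ := huv
  obtain ⟨bnode, ⟨z, hz, hzb⟩, hmeet⟩ := aux_sep td p s
  -- shortest walks from s to u and s to v
  obtain ⟨Wu, hWu⟩ := hG.exists_walk_length_eq_dist s u
  obtain ⟨Wv, hWv⟩ := hG.exists_walk_length_eq_dist s v
  obtain ⟨x, hxW, hxb⟩ := hmeet u (SimpleGraph.Walk.start_mem_support p) Wu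
  obtain ⟨y, hyW, hyb⟩ := hmeet v (SimpleGraph.Walk.end_mem_support p) Wv
  set i := G.dist s u with hi
  -- x splits a shortest s-u walk
  have hxsplit : G.dist s x + G.dist x u = i := by
    have h1 : G.dist s x ≤ (Wu.takeUntil x hxW).length := dist_le _
    have h2 : G.dist x u ≤ (Wu.dropUntil x hxW).length := dist_le _
    have h3 : (Wu.takeUntil x hxW).length + (Wu.dropUntil x hxW).length = Wu.length := by
      have := congrArg SimpleGraph.Walk.length (Wu.take_spec hxW)
      rwa [SimpleGraph.Walk.length_append] at this
    have h4 := hG.dist_triangle (u := s) (v := x) (w := u)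
    omega
  have hysplit : G.dist s y + G.dist y v = i := by
    have h1 : G.dist s y ≤ (Wv.takeUntil y hyW).length := dist_le _
    have h2 : G.dist y v ≤ (Wv.dropUntil y hyW).length := dist_le _
    have h3 : (Wv.takeUntil y hyW).length + (Wv.dropUntil y hyW).length = Wv.length := by
      have := congrArg SimpleGraph.Walk.length (Wv.take_spec hyW)
      rwa [SimpleGraph.Walk.length_append] at this
    have h4 := hG.dist_triangle (u := s) (v := y) (w := v)
    omega
  -- distances inside the bag
  have hxz : G.dist x z ≤ t := hlen bnode x hxb z hzb
  have hyz : G.dist y z ≤ t := hlen bnode y hyb z hzb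
  have hxy : G.dist x y ≤ t := hlen bnode x hxb y hyb
  have hzfar : i ≤ G.dist s z := hsupp z hz
  have hsx : i ≤ G.dist s x + t := by
    have := hG.dist_triangle (u := s) (v := x) (w := z)
    omega
  have hsy : i ≤ G.dist s y + t := by
    have := hG.dist_triangle (u := s) (v := y) (w := z)
    omega
  have hxu : G.dist x u ≤ t := by omega
  have hyv : G.dist y v ≤ t := by omega
  calc G.dist u v ≤ G.dist u x + G.dist x v := hG.dist_triangle
    _ ≤ G.dist u x + (G.dist x y + G.dist y v) := by
        have := hG.dist_triangle (u := x) (v := y) (w := v)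
        omega
    _ ≤ t + (t + t) := by
        have hux : G.dist u x = G.dist x u := SimpleGraph.dist_comm
        omega
    _ ≤ 3 * t + 1 := by omega

/-- The trivial tree decomposition with a single bag. -/
lemma aux_hasTDLength {V : Type} [Fintype V] (G : SimpleGraph V) (hG : G.Connected) :
    ∃ ℓ, HasTDLength G ℓ := by
  classical
  refine ⟨Finset.univ.sup (fun pr : V × V => G.dist pr.1 pr.2), Unit, ?_, ?_⟩
  · refine ⟨⊥, ⟨?_, ?_⟩, fun _ => Set.univ, fun v => ⟨(), trivial⟩,
      fun u v _ => ⟨(), trivial, trivial⟩, fun v => ?_⟩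
    · exact SimpleGraph.Connected.mk (fun a b => (Subsingleton.elim a b) ▸ Reachable.refl _)
    · intro v c hc
      cases c with
      | nil => exact hc.ne_nil rfl
      | cons h _ => exact h.elim
    · haveI : Nonempty {t : Unit | v ∈ (Set.univ : Set V)} := ⟨⟨(), trivial⟩⟩
      exact SimpleGraph.Connected.mk (fun a b => (Subsingleton.elim a b) ▸ Reachable.refl _)
  · intro _ u _ v _
    exact Finset.le_sup (f := fun pr : V × V => G.dist pr.1 pr.2) (Finset.mem_univ (u, v))

/-- If `G` is a finite connected simple graph with maximum degree
at most `d` and tree-length at most `t`, then every layering class of `G` with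
respect to `s` contains at most `∑_{m=0}^{3t+1} d^m` vertices. -/
theorem layering_class_card_le {V : Type} [Fintype V]
    (G : SimpleGraph V) (hG : G.Connected) (d t : ℕ)
    (hdeg : ∀ v : V, (G.neighborSet v).ncard ≤ d)
    (htl : treeLength G ≤ t) (s : V) :
    ∀ C : Set V, IsLayeringClass G s C →
      C.ncard ≤ ∑ m ∈ Finset.range (3 * t + 2), d ^ m := by
  classical
  rintro C ⟨v, rfl⟩
  -- G has a tree decomposition of length at most t
  have htd : HasTDLength G t := by
    obtain ⟨ℓ, hℓ⟩ := aux_hasTDLength G hG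
    have hne : {ℓ | HasTDLength G ℓ}.Nonempty := ⟨ℓ, hℓ⟩
    have hmem : treeLength G ∈ {ℓ | HasTDLength G ℓ} := Nat.sInf_mem hne
    obtain ⟨ι, td, hlen⟩ := hmem
    exact ⟨ι, td, fun n x hx y hy => le_trans (hlen n x hx y hy) htl⟩
  -- the class is contained in the ball of radius 3t+1 around v
  have hsub : layeringClassOf G s v ⊆
      ↑(Finset.univ.filter (fun u => G.dist v u ≤ 3 * t + 1)) := by
    intro u hu
    simp only [Finset.coe_filter, Set.mem_setOf_eq, Finset.mem_univ, true_and]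
    exact aux_dist_le G hG t htd s v u hu
  calc (layeringClassOf G s v).ncard
      ≤ (↑(Finset.univ.filter (fun u => G.dist v u ≤ 3 * t + 1)) : Set V).ncard :=
        Set.ncard_le_ncard hsub (Set.toFinite _)
    _ = (Finset.univ.filter (fun u => G.dist v u ≤ 3 * t + 1)).card := Set.ncard_coe_finset _
    _ ≤ ∑ m ∈ Finset.range (3 * t + 1 + 1), d ^ m := aux_ball_card G hG d hdeg v _
    _ = ∑ m ∈ Finset.range (3 * t + 2), d ^ m := by ring_nf
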